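/- Let m be a positive integer and M a positive real. Define the 2m×2m symmetric real matrix L in 2×2 block form with diagonal blocks L11 = Diag(4(M+m), 4(M+m−1), …, 4(M+1)) and L22 = Diag(4m, 4(m−1), …, 4), and off-diagonal blocks L12 = L21 = Diag(M+2m, M+2m−2, …, M+2). If M ≤ 12 (more precisely, if M < 1/(−1/2+1/√3)), then L is positive definite. -/

import Mathlib

lemma quad_pos (a b d u v : ℝ) (ha : 0 < a) (hdet : b^2 < a*d)
    (huv : u ≠ 0 ∨ v ≠ 0) : 0 < a*u^2 + 2*b*u*v + d*v^2 := by
  have hd : 0 < d := by nlinarith [sq_nonneg b]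
  rcases huv with hu | hv
  · have hu2 : 0 < u^2 := by positivity
    nlinarith [sq_nonneg (b*u + d*v), mul_pos (sub_pos.2 hdet) hu2]
  · have hv2 : 0 < v^2 := by positivity
    nlinarith [sq_nonneg (a*u + b*v), mul_pos (sub_pos.2 hdet) hv2]

lemma det_pos (M k : ℝ) (hM : 0 < M) (hk : 1 ≤ k)
    (hM12 : M < 1 / (-(1 / 2) + 1 / Real.sqrt 3)) :
    (M + 2*k)^2 < (4*(M+k)) * (4*k) := by
  have hsp : 0 < Real.sqrt 3 := Real.sqrt_pos.2 (by norm_num)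
  have hs : Real.sqrt 3 * Real.sqrt 3 = 3 := Real.mul_self_sqrt (by norm_num)
  have h2 : Real.sqrt 3 < 2 := by nlinarith
  have h13 : (1:ℝ)/Real.sqrt 3 = Real.sqrt 3 / 3 := by
    rw [div_eq_div_iff hsp.ne' (by norm_num : (3:ℝ) ≠ 0), one_mul, hs]
  have hc : 0 < -(1/2 : ℝ) + 1 / Real.sqrt 3 := by rw [h13]; nlinarith
  have hMc : M * (-(1/2) + Real.sqrt 3 / 3) < 1 := by
    have := (lt_div_iff₀ hc).1 hM12
    calc M * (-(1/2) + Real.sqrt 3 / 3) = M * (-(1/2) + 1/Real.sqrt 3) := by rw [h13]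
    _ < 1 := by linarith [this]
  have key : M * Real.sqrt 3 / 3 < k + M/2 := by nlinarith
  have hsq := mul_self_lt_mul_self (by positivity) key
  nlinarith [hsq, hs]

/-- The `2m×2m` block matrix `L` with diagonal blocks
`Diag(4(M+m−j))_{j=0..m−1}`, `Diag(4(m−j))_{j=0..m−1}` and off-diagonal blocks
`Diag(M+2(m−j))_{j=0..m−1}` is positive definite when `M < 1/(−1/2 + 1/√3)`. -/
theorem stmt_2 (m : ℕ) (hm : 0 < m) (M : ℝ) (hM : 0 < M)
    (hM12 : M < 1 / (-(1 / 2) + 1 / Real.sqrt 3)) :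
    (Matrix.fromBlocks
      (Matrix.diagonal fun j : Fin m => 4 * (M + (m : ℝ) - (j : ℕ)))
      (Matrix.diagonal fun j : Fin m => M + 2 * ((m : ℝ) - (j : ℕ)))
      (Matrix.diagonal fun j : Fin m => M + 2 * ((m : ℝ) - (j : ℕ)))
      (Matrix.diagonal fun j : Fin m => 4 * ((m : ℝ) - (j : ℕ)))).PosDef := by
  have hk : ∀ j : Fin m, 1 ≤ (m : ℝ) - (j : ℕ) := by
    intro j
    have := j.isLt
    have : (j : ℕ) + 1 ≤ m := this
    have : ((j : ℕ) : ℝ) + 1 ≤ (m : ℝ) := by exact_mod_cast this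
    linarith
  rw [Matrix.posDef_iff_dotProduct_mulVec]
  constructor
  · rw [Matrix.IsHermitian, Matrix.fromBlocks_conjTranspose]
    simp [Matrix.diagonal_conjTranspose]
  · intro x hx
    rw [dotProduct, Fintype.sum_sum_type]
    simp only [Matrix.fromBlocks_mulVec, Matrix.mulVec_diagonal, Sum.elim_inl,
      Sum.elim_inr, Pi.add_apply, star_trivial, Pi.star_apply, Function.comp_apply]
    rw [← Finset.sum_add_distrib]
    obtain ⟨i, hi⟩ := Function.ne_iff.mp hx
    simp only [Pi.zero_apply] at hi
    refine Finset.sum_pos' (fun j _ => ?_) ?_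
    · have := quad_pos (4*(M+((m:ℝ)-(j:ℕ)))) (M+2*((m:ℝ)-(j:ℕ))) (4*((m:ℝ)-(j:ℕ)))
        (x (Sum.inl j)) (x (Sum.inr j)) (by nlinarith [hk j])
        (by have := det_pos M ((m:ℝ)-(j:ℕ)) hM (hk j) hM12; nlinarith)
      by_cases h1 : x (Sum.inl j) = 0
      · by_cases h2 : x (Sum.inr j) = 0
        · simp [h1, h2]
        · nlinarith [this (Or.inr h2)]
      · nlinarith [this (Or.inl h1)]
    · obtain j | j := i
      · refine ⟨j, Finset.mem_univ j, ?_⟩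
        have := quad_pos (4*(M+((m:ℝ)-(j:ℕ)))) (M+2*((m:ℝ)-(j:ℕ))) (4*((m:ℝ)-(j:ℕ)))
          (x (Sum.inl j)) (x (Sum.inr j)) (by nlinarith [hk j])
          (by have := det_pos M ((m:ℝ)-(j:ℕ)) hM (hk j) hM12; nlinarith)
          (Or.inl hi)
        nlinarith
      · refine ⟨j, Finset.mem_univ j, ?_⟩
        have := quad_pos (4*(M+((m:ℝ)-(j:ℕ)))) (M+2*((m:ℝ)-(j:ℕ))) (4*((m:ℝ)-(j:ℕ)))
          (x (Sum.inl j)) (x (Sum.inr j)) (by nlinarith [hk j])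
          (by have := det_pos M ((m:ℝ)-(j:ℕ)) hM (hk j) hM12; nlinarith)
          (Or.inr hi)
        nlinarith
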